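/- Let S(α) = ∑_{n∈ℤ} cₙ e(nα) with ∑|cₙ| < ∞, and let H be a positive integer. Then ∫₀¹ |S(α)|² K(α,H) dα = (1/H) ∫_{-∞}^{∞} |∑_{x<n<x+H} cₙ|² dx, where K(α,H) = ∑_{|n|≤H}(1-|n|/H)e(nα) is the Fejér kernel. -/

import Mathlib

open MeasureTheory Finset intervalIntegral
open scoped NNReal ENNReal

noncomputable def e (u : ℝ) : ℂ := Complex.exp (2 * Real.pi * Complex.I * u)

/-- `S(α) = ∑_{n ∈ ℤ} cₙ e(nα)`. -/
noncomputable def S (c : ℤ → ℂ) (α : ℝ) : ℂ := ∑' n : ℤ, c n * e (n * α)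

/-- The Fejér kernel `K(α, H) = ∑_{|n| ≤ H} (1 - |n|/H) e(nα)`. -/
noncomputable def K (α : ℝ) (H : ℕ) : ℂ :=
  ∑ n ∈ Finset.Icc (-(H : ℤ)) (H : ℤ), ((1 - (|n| : ℝ) / H : ℝ) : ℂ) * e (n * α)

lemma e_norm (u : ℝ) : ‖e u‖ = 1 := by
  simp [e, Complex.norm_exp, mul_comm, mul_assoc]

lemma e_add (u v : ℝ) : e u * e v = e (u + v) := by
  rw [e, e, e, ← Complex.exp_add]; push_cast; ring_nf

lemma e_conj (u : ℝ) : (starRingEnd ℂ) (e u) = e (-u) := by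
  rw [e, e, ← Complex.exp_conj]
  push_cast
  simp [map_mul, map_ofNat, Complex.conj_I, Complex.conj_ofReal]


lemma continuous_e : Continuous e := by
  unfold e; fun_prop

lemma integral_e (k : ℤ) : (∫ α in (0:ℝ)..1, e (k * α)) = if k = 0 then 1 else 0 := by
  split_ifs with h
  · simp [h, e]
  · have hc : (2 * Real.pi * Complex.I * k : ℂ) ≠ 0 := by
      simp [Real.pi_ne_zero, Complex.I_ne_zero, h]
    have : ∀ α : ℝ, e (k * α) = Complex.exp ((2 * Real.pi * Complex.I * k) * α) := by
      intro α; rw [e]; push_cast; ring_nf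
    simp only [this]
    rw [integral_exp_mul_complex hc]
    have h1 : (2 * Real.pi * Complex.I * k) * (1:ℝ) = (k : ℂ) * (2 * Real.pi * Complex.I) := by
      push_cast; ring
    have h0 : (2 * Real.pi * Complex.I * k) * (0:ℝ) = 0 := by push_cast; ring
    rw [h1, h0, Complex.exp_int_mul_two_pi_mul_I, Complex.exp_zero, sub_self, zero_div]

lemma sq_norm_eq (z : ℂ) : ((‖z‖^2 : ℝ) : ℂ) = z * (starRingEnd ℂ) z := by
  rw [Complex.mul_conj]
  norm_cast
  rw [Complex.normSq_eq_norm_sq]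

lemma S_mul_conj (c : ℤ → ℂ) (hc : Summable fun n => ‖c n‖) (α : ℝ) :
    ((‖S c α‖^2 : ℝ) : ℂ)
      = ∑' p : ℤ × ℤ, c p.1 * (starRingEnd ℂ) (c p.2) * e ((p.1 - p.2) * α) := by
  have h1 : Summable fun n : ℤ => ‖c n * e (n * α)‖ := by
    simp only [norm_mul, e_norm, mul_one]; exact hc
  have h2 : Summable fun n : ℤ => ‖(starRingEnd ℂ) (c n) * e (-(n * α))‖ := by
    simp only [norm_mul, e_norm, mul_one, RCLike.norm_conj]; exact hc
  have hconj : (starRingEnd ℂ) (S c α) = ∑' n : ℤ, (starRingEnd ℂ) (c n) * e (-(n * α)) := by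
    rw [S]
    show star _ = _
    rw [tsum_star]
    congr 1; funext n
    rw [star_mul', ← e_conj]; rfl
  rw [sq_norm_eq, hconj, S, tsum_mul_tsum_of_summable_norm h1 h2]
  congr 1; funext p
  rw [mul_mul_mul_comm, e_add]
  congr 2
  push_cast; ring

lemma integral_e_mul_K (H : ℕ) (hH : 0 < H) (d : ℤ) :
    (∫ α in (0:ℝ)..1, e (d * α) * K α H)
      = ((max (1 - |(d:ℝ)| / H) 0 : ℝ) : ℂ) := by
  have hpt : ∀ α : ℝ, e (d * α) * K α H
      = ∑ m ∈ Finset.Icc (-(H:ℤ)) (H:ℤ), ((1 - (|m|:ℝ)/H : ℝ):ℂ) * e ((d + m) * α) := by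
    intro α
    rw [K, Finset.mul_sum]
    refine Finset.sum_congr rfl fun m _ => ?_
    rw [mul_left_comm, e_add]
    congr 2
    push_cast; ring
  simp only [hpt]
  rw [intervalIntegral.integral_finset_sum]
  · have : ∀ m ∈ Finset.Icc (-(H:ℤ)) (H:ℤ),
        (∫ α in (0:ℝ)..1, ((1 - (|m|:ℝ)/H : ℝ):ℂ) * e ((d + m) * α))
          = if m = -d then ((1 - (|(d:ℝ)|)/H : ℝ):ℂ) else 0 := by
      intro m _
      rw [intervalIntegral.integral_const_mul,
        show ((d:ℝ) + (m:ℝ)) = ((d + m : ℤ) : ℝ) by push_cast; ring, integral_e]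
      by_cases h : m = -d
      · subst h
        simp [abs_neg]
      · rw [if_neg (by omega), if_neg h, mul_zero]
    rw [Finset.sum_congr rfl this, Finset.sum_ite_eq' _ (-d)]
    have habs : |(d:ℝ)| = ((|d| : ℤ) : ℝ) := by push_cast; rfl
    by_cases hd : -d ∈ Finset.Icc (-(H:ℤ)) (H:ℤ)
    · rw [if_pos hd]
      have : |d| ≤ (H:ℤ) := by
        simp only [Finset.mem_Icc] at hd; rw [abs_le]; omega
      have h1 : |(d:ℝ)| / H ≤ 1 := by
        rw [div_le_one (by positivity)]
        rw [habs]; exact_mod_cast this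
      rw [max_eq_left (by linarith)]
    · rw [if_neg hd]
      have : (H:ℤ) < |d| := by
        simp only [Finset.mem_Icc, not_and_or, not_le] at hd; rw [lt_abs]; omega
      have h1 : 1 < |(d:ℝ)| / H := by
        rw [lt_div_iff₀ (by positivity), one_mul, habs]
        exact_mod_cast this
      rw [max_eq_right (by linarith)]
      norm_num
  · intro m _
    apply Continuous.intervalIntegrable
    exact continuous_const.mul (continuous_e.comp (continuous_const.mul continuous_id))

lemma K_norm_le (α : ℝ) (H : ℕ) (hH : 0 < H) : ‖K α H‖ ≤ 2 * H + 1 := by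
  calc ‖K α H‖ ≤ ∑ n ∈ Finset.Icc (-(H:ℤ)) (H:ℤ), ‖((1 - (|n|:ℝ)/H : ℝ):ℂ) * e (n * α)‖ :=
        norm_sum_le _ _
    _ ≤ ∑ n ∈ Finset.Icc (-(H:ℤ)) (H:ℤ), 1 := by
        refine Finset.sum_le_sum fun n hn => ?_
        rw [norm_mul, e_norm, mul_one, Complex.norm_real]
        simp only [Finset.mem_Icc] at hn
        have h1 : |(n:ℝ)| ≤ H := by
          have : |n| ≤ (H:ℤ) := by rw [abs_le]; omega
          calc |(n:ℝ)| = ((|n|:ℤ):ℝ) := by push_cast; rfl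
            _ ≤ H := by exact_mod_cast this
        have h2 : 0 ≤ |(n:ℝ)| / H := by positivity
        have h3 : |(n:ℝ)| / H ≤ 1 := by rw [div_le_one (by positivity)]; exact h1
        rw [Real.norm_eq_abs, abs_le]; constructor <;> linarith
    _ = 2 * H + 1 := by
        rw [Finset.sum_const, Int.card_Icc, nsmul_eq_mul, mul_one]
        have : ((H:ℤ) + 1 - -(H:ℤ)).toNat = 2*H+1 := by omega
        rw [this]; push_cast; ring

lemma continuous_K (H : ℕ) : Continuous fun α => K α H := by
  unfold K
  exact continuous_finset_sum _ fun n _ =>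
    continuous_const.mul (continuous_e.comp (continuous_const.mul continuous_id))

lemma pair_tsum_ne_top (c : ℤ → ℂ) (hc : Summable fun n => ‖c n‖) (C : ℝ≥0) :
    ∑' p : ℤ × ℤ, ((‖c p.1‖₊ : ℝ≥0∞) * (‖c p.2‖₊ : ℝ≥0∞) * (C : ℝ≥0∞)) ≠ ∞ := by
  have hs : Summable fun p : ℤ × ℤ => (‖c p.1‖₊ * ‖c p.2‖₊ : ℝ≥0) := by
    rw [← NNReal.summable_coe]
    simpa using hc.mul_of_nonneg hc (fun n => norm_nonneg _) (fun n => norm_nonneg _)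
  have h1 : ∑' p : ℤ × ℤ, ((‖c p.1‖₊ * ‖c p.2‖₊ : ℝ≥0) : ℝ≥0∞) ≠ ∞ :=
    ENNReal.tsum_coe_ne_top_iff_summable.2 hs
  have h2 : ∑' p : ℤ × ℤ, ((‖c p.1‖₊ : ℝ≥0∞) * (‖c p.2‖₊ : ℝ≥0∞) * (C : ℝ≥0∞))
      = (∑' p : ℤ × ℤ, ((‖c p.1‖₊ * ‖c p.2‖₊ : ℝ≥0) : ℝ≥0∞)) * C := by
    rw [← ENNReal.tsum_mul_right]
    congr 1
  rw [h2]
  exact ENNReal.mul_ne_top h1 ENNReal.coe_ne_top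

lemma lhs_eq (c : ℤ → ℂ) (hc : Summable fun n => ‖c n‖) (H : ℕ) (hH : 0 < H) :
    (∫ α in (0:ℝ)..1, ((‖S c α‖ ^ 2 : ℝ) : ℂ) * K α H)
      = ∑' p : ℤ × ℤ, c p.1 * (starRingEnd ℂ) (c p.2)
          * ((max (1 - |((p.1 : ℝ) - (p.2 : ℝ))| / H) 0 : ℝ) : ℂ) := by
  set C : ℝ≥0 := (2 * H + 1 : ℝ≥0) with hC
  have hCr : (C : ℝ) = 2 * H + 1 := by rw [hC]; push_cast; ring
  have hpt : ∀ α : ℝ, ((‖S c α‖ ^ 2 : ℝ) : ℂ) * K α H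
      = ∑' p : ℤ × ℤ, c p.1 * (starRingEnd ℂ) (c p.2) * e (((p.1 : ℝ) - p.2) * α) * K α H := by
    intro α
    rw [S_mul_conj c hc α, ← tsum_mul_right]
  simp only [hpt]
  rw [intervalIntegral.integral_of_le zero_le_one]
  have hmeas : ∀ p : ℤ × ℤ, AEStronglyMeasurable
      (fun α : ℝ => c p.1 * (starRingEnd ℂ) (c p.2) * e (((p.1 : ℝ) - p.2) * α) * K α H)
      (volume.restrict (Set.Ioc (0:ℝ) 1)) := by
    intro p
    exact ((continuous_const.mul (continuous_e.comp
      (continuous_const.mul continuous_id))).mul (continuous_K H)).aestronglyMeasurable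
  have hbd : ∀ p : ℤ × ℤ,
      (∫⁻ α in Set.Ioc (0:ℝ) 1,
        ‖c p.1 * (starRingEnd ℂ) (c p.2) * e (((p.1 : ℝ) - p.2) * α) * K α H‖₊)
        ≤ (‖c p.1‖₊ : ℝ≥0∞) * (‖c p.2‖₊ : ℝ≥0∞) * (C : ℝ≥0∞) := by
    intro p
    have hKn : ∀ α : ℝ, ‖K α H‖₊ ≤ C := by
      intro α
      rw [← NNReal.coe_le_coe, coe_nnnorm, hCr]
      exact K_norm_le α H hH
    have hterm : ∀ α : ℝ,
        (‖c p.1 * (starRingEnd ℂ) (c p.2) * e (((p.1 : ℝ) - p.2) * α) * K α H‖₊ : ℝ≥0∞)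
          ≤ (‖c p.1‖₊ : ℝ≥0∞) * (‖c p.2‖₊ : ℝ≥0∞) * (C : ℝ≥0∞) := by
      intro α
      have : ‖c p.1 * (starRingEnd ℂ) (c p.2) * e (((p.1 : ℝ) - p.2) * α) * K α H‖₊
          ≤ ‖c p.1‖₊ * ‖c p.2‖₊ * C := by
        have he : ‖e (((p.1 : ℝ) - p.2) * α)‖₊ = 1 := by
          ext; rw [coe_nnnorm, e_norm]; rfl
        calc ‖c p.1 * (starRingEnd ℂ) (c p.2) * e (((p.1 : ℝ) - p.2) * α) * K α H‖₊
            = ‖c p.1‖₊ * ‖c p.2‖₊ * ‖e (((p.1 : ℝ) - p.2) * α)‖₊ * ‖K α H‖₊ := by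
              simp [nnnorm_mul, RCLike.nnnorm_conj]
          _ = ‖c p.1‖₊ * ‖c p.2‖₊ * ‖K α H‖₊ := by rw [he, mul_one]
          _ ≤ ‖c p.1‖₊ * ‖c p.2‖₊ * C := by
              exact mul_le_mul_right (hKn α) _
      exact_mod_cast ENNReal.coe_le_coe.2 this
    calc (∫⁻ α in Set.Ioc (0:ℝ) 1,
          ‖c p.1 * (starRingEnd ℂ) (c p.2) * e (((p.1 : ℝ) - p.2) * α) * K α H‖₊)
        ≤ ∫⁻ _ in Set.Ioc (0:ℝ) 1, (‖c p.1‖₊ : ℝ≥0∞) * (‖c p.2‖₊ : ℝ≥0∞) * (C : ℝ≥0∞) :=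
          lintegral_mono fun α => hterm α
      _ = (‖c p.1‖₊ : ℝ≥0∞) * (‖c p.2‖₊ : ℝ≥0∞) * (C : ℝ≥0∞) := by
          rw [setLIntegral_const, Real.volume_Ioc]
          norm_num
  rw [MeasureTheory.integral_tsum hmeas
    (ne_top_of_le_ne_top (pair_tsum_ne_top c hc C) (ENNReal.tsum_le_tsum hbd))]
  congr 1
  funext p
  rw [← intervalIntegral.integral_of_le zero_le_one, mul_assoc]
  simp only [← mul_assoc]
  rw [show (fun α : ℝ => c p.1 * (starRingEnd ℂ) (c p.2) * e (((p.1 : ℝ) - p.2) * α) * K α H)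
      = fun α : ℝ => c p.1 * (starRingEnd ℂ) (c p.2) * (e ((((p.1 - p.2 : ℤ)) : ℝ) * α) * K α H) by
    funext α; push_cast; ring]
  rw [intervalIntegral.integral_const_mul, integral_e_mul_K H hH]
  push_cast
  ring

lemma vol_identity (a b Hr : ℝ) (hH : 0 < Hr) :
    max (min a b - max (a - Hr) (b - Hr)) 0 = Hr * max (1 - |a - b| / Hr) 0 := by
  have h1 : min a b - max (a - Hr) (b - Hr) = Hr - |a - b| := by
    rcases le_total a b with h | h
    · rw [min_eq_left h, max_eq_right (by linarith), abs_of_nonpos (by linarith)]; ring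
    · rw [min_eq_right h, max_eq_left (by linarith), abs_of_nonneg (by linarith)]; ring
  rw [h1, mul_max_of_nonneg _ _ hH.le, mul_zero]
  congr 1
  field_simp

lemma rhs_eq (c : ℤ → ℂ) (hc : Summable fun n => ‖c n‖) (H : ℕ) (hH : 0 < H) :
    (((1 / H) * ∫ x : ℝ, ‖∑' n : ℤ, if x < (n : ℝ) ∧ (n : ℝ) < x + H then c n else 0‖ ^ 2 :
        ℝ) : ℂ)
      = ∑' p : ℤ × ℤ, c p.1 * (starRingEnd ℂ) (c p.2)
          * ((max (1 - |((p.1 : ℝ) - (p.2 : ℝ))| / H) 0 : ℝ) : ℂ) := by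
  have hHr : (0:ℝ) < H := by exact_mod_cast hH
  -- indicator form
  have hind : ∀ (z : ℂ) (n : ℤ) (x : ℝ),
      (if x < (n : ℝ) ∧ (n : ℝ) < x + H then z else 0)
        = (Set.Ioo ((n:ℝ) - H) (n:ℝ)).indicator (fun _ => z) x := by
    intro z n x
    rw [Set.indicator_apply]
    refine if_congr ?_ rfl rfl
    rw [Set.mem_Ioo]
    constructor <;> rintro ⟨h1, h2⟩ <;> constructor <;> linarith
  have hsum : ∀ x : ℝ, Summable fun n : ℤ =>
      ‖if x < (n : ℝ) ∧ (n : ℝ) < x + H then c n else 0‖ := by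
    intro x
    refine Summable.of_nonneg_of_le (fun n => norm_nonneg _) (fun n => ?_) hc
    split_ifs
    · exact le_refl _
    · simp
  have hsum' : ∀ x : ℝ, Summable fun n : ℤ =>
      ‖if x < (n : ℝ) ∧ (n : ℝ) < x + H then (starRingEnd ℂ) (c n) else 0‖ := by
    intro x
    refine Summable.of_nonneg_of_le (fun n => norm_nonneg _) (fun n => ?_) hc
    split_ifs
    · exact le_of_eq (RCLike.norm_conj _)
    · simp
  -- pointwise expansion
  have hpt : ∀ x : ℝ, ((‖∑' n : ℤ, if x < (n:ℝ) ∧ (n:ℝ) < x + H then c n else 0‖ ^ 2 : ℝ) : ℂ)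
      = ∑' p : ℤ × ℤ, (Set.Ioo ((p.1:ℝ) - H) (p.1:ℝ) ∩ Set.Ioo ((p.2:ℝ) - H) (p.2:ℝ)).indicator
          (fun _ => c p.1 * (starRingEnd ℂ) (c p.2)) x := by
    intro x
    rw [sq_norm_eq]
    have hstar : (starRingEnd ℂ) (∑' n : ℤ, if x < (n:ℝ) ∧ (n:ℝ) < x + H then c n else 0)
        = ∑' n : ℤ, if x < (n:ℝ) ∧ (n:ℝ) < x + H then (starRingEnd ℂ) (c n) else 0 := by
      show star _ = _
      rw [tsum_star]
      congr 1; funext n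
      rw [apply_ite star, star_zero]; rfl
    rw [hstar, tsum_mul_tsum_of_summable_norm (hsum x) (hsum' x)]
    congr 1; funext p
    rw [hind, hind, ← Set.inter_indicator_mul]
  -- measurability
  have hmeas : ∀ p : ℤ × ℤ, AEStronglyMeasurable
      (fun x : ℝ => (Set.Ioo ((p.1:ℝ) - H) (p.1:ℝ) ∩ Set.Ioo ((p.2:ℝ) - H) (p.2:ℝ)).indicator
        (fun _ => c p.1 * (starRingEnd ℂ) (c p.2)) x) volume := fun p =>
    (stronglyMeasurable_const.indicator
      (measurableSet_Ioo.inter measurableSet_Ioo)).aestronglyMeasurable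
  -- lintegral bound
  have hbd : ∀ p : ℤ × ℤ,
      (∫⁻ x : ℝ, ‖(Set.Ioo ((p.1:ℝ) - H) (p.1:ℝ) ∩ Set.Ioo ((p.2:ℝ) - H) (p.2:ℝ)).indicator
          (fun _ => c p.1 * (starRingEnd ℂ) (c p.2)) x‖₊)
        ≤ (‖c p.1‖₊ : ℝ≥0∞) * (‖c p.2‖₊ : ℝ≥0∞) * ((H : ℝ≥0) : ℝ≥0∞) := by
    intro p
    set s := Set.Ioo ((p.1:ℝ) - H) (p.1:ℝ) ∩ Set.Ioo ((p.2:ℝ) - H) (p.2:ℝ) with hs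
    set z := c p.1 * (starRingEnd ℂ) (c p.2) with hz
    have h1 : (fun x : ℝ => (‖s.indicator (fun _ => z) x‖₊ : ℝ≥0∞))
        = fun x : ℝ => s.indicator (fun _ => (‖z‖₊ : ℝ≥0∞)) x := by
      funext x
      rw [Set.indicator_apply, Set.indicator_apply]
      split_ifs <;> simp
    rw [h1, lintegral_indicator_const (measurableSet_Ioo.inter measurableSet_Ioo)]
    have h2 : (‖z‖₊ : ℝ≥0∞) ≤ (‖c p.1‖₊ : ℝ≥0∞) * (‖c p.2‖₊ : ℝ≥0∞) := by
      rw [hz]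
      refine le_of_eq ?_
      rw [← ENNReal.coe_mul]
      norm_cast
      rw [nnnorm_mul, RCLike.nnnorm_conj]
    have h3 : volume s ≤ ((H : ℝ≥0) : ℝ≥0∞) := by
      calc volume s ≤ volume (Set.Ioo ((p.1:ℝ) - H) (p.1:ℝ)) :=
            measure_mono Set.inter_subset_left
        _ = ENNReal.ofReal ((p.1:ℝ) - ((p.1:ℝ) - H)) := Real.volume_Ioo
        _ = ((H : ℝ≥0) : ℝ≥0∞) := by
            rw [show ((p.1:ℝ) - ((p.1:ℝ) - H)) = (H:ℝ) by ring]
            rw [ENNReal.ofReal_natCast]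
            norm_cast
    exact mul_le_mul' h2 h3
  -- per-p integral value
  have hint : ∀ p : ℤ × ℤ,
      (∫ x : ℝ, (Set.Ioo ((p.1:ℝ) - H) (p.1:ℝ) ∩ Set.Ioo ((p.2:ℝ) - H) (p.2:ℝ)).indicator
          (fun _ => c p.1 * (starRingEnd ℂ) (c p.2)) x)
        = ((H * max (1 - |((p.1:ℝ) - (p.2:ℝ))| / H) 0 : ℝ) : ℂ)
            * (c p.1 * (starRingEnd ℂ) (c p.2)) := by
    intro p
    rw [integral_indicator_const _ (measurableSet_Ioo.inter measurableSet_Ioo)]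
    rw [Set.Ioo_inter_Ioo, Real.volume_real_Ioo]
    rw [vol_identity _ _ _ hHr]
    rw [Complex.real_smul]
  -- assemble
  have hofr : ((∫ x : ℝ, ‖∑' n : ℤ, if x < (n:ℝ) ∧ (n:ℝ) < x + (H:ℝ) then c n else 0‖^2 : ℝ) : ℂ)
      = ∫ x : ℝ, ((‖∑' n : ℤ, if x < (n:ℝ) ∧ (n:ℝ) < x + (H:ℝ) then c n else 0‖^2 : ℝ) : ℂ) :=
    _root_.integral_ofReal.symm
  rw [Complex.ofReal_mul, hofr]
  simp only [hpt]
  rw [integral_tsum hmeas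
    (ne_top_of_le_ne_top (pair_tsum_ne_top c hc (H : ℝ≥0)) (ENNReal.tsum_le_tsum hbd))]
  rw [← tsum_mul_left]
  congr 1; funext p
  rw [hint p]
  rw [Complex.ofReal_mul]
  have hHne : (H:ℂ) ≠ 0 := by exact_mod_cast hH.ne'
  push_cast
  field_simp

theorem fejer_smoothed_identity (c : ℤ → ℂ) (hc : Summable fun n => ‖c n‖)
    (H : ℕ) (hH : 0 < H) :
    ∫ α in (0:ℝ)..1, ((‖S c α‖ ^ 2 : ℝ) : ℂ) * K α H
      = (((1 / H) * ∫ x : ℝ, ‖∑' n : ℤ, if x < (n : ℝ) ∧ (n : ℝ) < x + H then c n else 0‖ ^ 2 :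
          ℝ) : ℂ) := by
  rw [lhs_eq c hc H hH]
  exact (rhs_eq c hc H hH).symm
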